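/- If 0 < h and n·h ≤ arcsinh(ln(2/ε - 1)/π) for some ε ∈ (0,1), then the abscissa x_n = tanh((π/2)·sinh(n·h)) satisfies 1 - x_n ≥ ε. -/

import Mathlib

open Real

lemma tanh_mono_aux {x y : ℝ} (hxy : x ≤ y) : Real.tanh x ≤ Real.tanh y := by
  rw [Real.tanh_eq_sinh_div_cosh, Real.tanh_eq_sinh_div_cosh,
    div_le_div_iff₀ (Real.cosh_pos x) (Real.cosh_pos y)]
  have h1 : Real.sinh (x - y) ≤ 0 := by
    have := Real.sinh_le_sinh.mpr (sub_nonpos.mpr hxy)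
    simpa using this
  rw [Real.sinh_sub] at h1
  linarith

theorem underflow_avoidance (h : ℝ) (hh : 0 < h) (n : ℕ) (ε : ℝ) (hε0 : 0 < ε) (hε1 : ε < 1)
    (hwin : (n : ℝ) * h ≤ Real.arsinh (Real.log (2 / ε - 1) / π)) :
    ε ≤ 1 - Real.tanh (π / 2 * Real.sinh ((n : ℝ) * h)) := by
  set c : ℝ := 2 / ε - 1 with hc
  have hc1 : 1 < c := by
    have : 2 < 2 / ε := by
      rw [lt_div_iff₀ hε0]; linarith
    simp [hc]; linarith
  have hc0 : 0 < c := by linarith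
  -- sinh monotone
  have h1 : Real.sinh ((n : ℝ) * h) ≤ Real.log c / π := by
    have := Real.sinh_le_sinh.mpr hwin
    rwa [Real.sinh_arsinh] at this
  have hpi := Real.pi_pos
  have h2 : π / 2 * Real.sinh ((n : ℝ) * h) ≤ Real.log c / 2 := by
    have := mul_le_mul_of_nonneg_left h1 (le_of_lt (by positivity : (0:ℝ) < π / 2))
    calc π / 2 * Real.sinh ((n : ℝ) * h) ≤ π / 2 * (Real.log c / π) := this
      _ = Real.log c / 2 := by field_simp
  have h3 : Real.tanh (π / 2 * Real.sinh ((n : ℝ) * h)) ≤ Real.tanh (Real.log c / 2) := by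
    exact tanh_mono_aux h2
  have h4 : Real.tanh (Real.log c / 2) = 1 - ε := by
    rw [Real.tanh_eq_sinh_div_cosh, Real.sinh_eq, Real.cosh_eq]
    set t : ℝ := Real.exp (Real.log c / 2) with ht
    have ht0 : 0 < t := Real.exp_pos _
    have ht2 : t ^ 2 = c := by
      rw [ht, ← Real.exp_nat_mul]
      push_cast
      rw [show (2:ℝ) * (Real.log c / 2) = Real.log c by ring, Real.exp_log hc0]
    have hneg : Real.exp (-(Real.log c / 2)) = t⁻¹ := by
      rw [Real.exp_neg, ht]
    rw [hneg]
    have hε' : ε ≠ 0 := ne_of_gt hε0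
    have hcp : c + 1 ≠ 0 := by linarith
    field_simp [hc] at ht2 ⊢
    nlinarith [ht2, sq_nonneg t, div_mul_cancel₀ (2:ℝ) hε', (by rw [ht2] : t^2 * ε = c * ε), (by rw [hc] : c * ε = (2/ε - 1) * ε)]
  linarith
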